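/- Let (M_n)_{n∈ℕ} be (d+1)×(d+1) integer matrices with nonnegative entries and determinant ±1, and write M_{[k,n)} = M_k M_{k+1}⋯M_{n−1}. Let v ∈ ℝ^{d+1} have nonnegative coordinates that are linearly independent over ℚ, and suppose ⋂_{n∈ℕ} M_{[0,n)}(ℝ_{≥0}^{d+1}) = {t·v : t ≥ 0}. Then the sequence is primitive: for every k ∈ ℕ there exists n ≥ k such that every entry of M_{[k,n)} is positive. -/

import Mathlib

/-- `prodM M k n = M_k * M_{k+1} * ⋯ * M_{n-1}` (the identity when `n ≤ k`). -/
def prodM {d : ℕ} (M : ℕ → Matrix (Fin (d + 1)) (Fin (d + 1)) ℤ) (k n : ℕ) :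
    Matrix (Fin (d + 1)) (Fin (d + 1)) ℤ :=
  ((List.range' k (n - k)).map M).prod

open Filter Topology Matrix

section Aux

variable {d : ℕ}

lemma prodM_stop (M : ℕ → Matrix (Fin (d + 1)) (Fin (d + 1)) ℤ) {k n : ℕ} (h : n ≤ k) :
    prodM M k n = 1 := by
  simp [prodM, Nat.sub_eq_zero_of_le h]

lemma prodM_split (M : ℕ → Matrix (Fin (d + 1)) (Fin (d + 1)) ℤ) {a b c : ℕ}
    (hab : a ≤ b) (hbc : b ≤ c) :
    prodM M a c = prodM M a b * prodM M b c := by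
  unfold prodM
  rw [← List.prod_append, ← List.map_append]
  congr 2
  have h := List.range'_append_1 (s := a) (m := b - a) (n := c - b)
  rw [Nat.add_sub_cancel' hab] at h
  rw [h]
  congr 1
  omega

lemma prodM_single (M : ℕ → Matrix (Fin (d + 1)) (Fin (d + 1)) ℤ) (n : ℕ) :
    prodM M n (n + 1) = M n := by
  simp [prodM]

lemma prodM_succ (M : ℕ → Matrix (Fin (d + 1)) (Fin (d + 1)) ℤ) {k n : ℕ} (h : k ≤ n) :
    prodM M k (n + 1) = prodM M k n * M n := by
  rw [prodM_split M h (Nat.le_succ n), prodM_single]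

lemma prodM_nonneg (M : ℕ → Matrix (Fin (d + 1)) (Fin (d + 1)) ℤ)
    (hpos : ∀ n i j, 0 ≤ M n i j) (k : ℕ) :
    ∀ n i j, 0 ≤ prodM M k n i j := by
  intro n
  induction n with
  | zero =>
    intro i j
    rw [prodM_stop M (Nat.zero_le k), Matrix.one_apply]
    split <;> norm_num
  | succ n ih =>
    intro i j
    by_cases h : n + 1 ≤ k
    · rw [prodM_stop M h, Matrix.one_apply]; split <;> norm_num
    · have hk : k ≤ n := by omega
      rw [prodM_succ M hk, Matrix.mul_apply]
      exact Finset.sum_nonneg fun l _ => mul_nonneg (ih i l) (hpos n l j)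

lemma prodM_det_isUnit (M : ℕ → Matrix (Fin (d + 1)) (Fin (d + 1)) ℤ)
    (hdet : ∀ n, (M n).det = 1 ∨ (M n).det = -1) (k : ℕ) :
    ∀ n, IsUnit (prodM M k n).det := by
  have hMdet : ∀ n, IsUnit (M n).det := by
    intro n
    rcases hdet n with h | h <;> rw [h]
    · exact isUnit_one
    · exact isUnit_one.neg
  intro n
  induction n with
  | zero => rw [prodM_stop M (Nat.zero_le k)]; simp
  | succ n ih =>
    by_cases h : n + 1 ≤ k
    · rw [prodM_stop M h]; simp
    · have hk : k ≤ n := by omega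
      rw [prodM_succ M hk, Matrix.det_mul]
      exact ih.mul (hMdet n)

end Aux

/-- If the nested images of the positive orthant under the products `M_{[0,n)}` of
nonnegative unimodular integer matrices intersect in the ray spanned by a totally
irrational nonnegative vector `v`, then the sequence of matrices is primitive. -/
theorem primitivity_of_irrational_limit_ray {d : ℕ} (hd : 1 ≤ d)
    (M : ℕ → Matrix (Fin (d + 1)) (Fin (d + 1)) ℤ)
    (hpos : ∀ n i j, 0 ≤ M n i j)
    (hdet : ∀ n, (M n).det = 1 ∨ (M n).det = -1)
    (v : Fin (d + 1) → ℝ) (hv : ∀ i, 0 ≤ v i)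
    (hirr : LinearIndependent ℚ v)
    (hcone : (⋂ n : ℕ, (fun z => ((prodM M 0 n).map (Int.cast : ℤ → ℝ)).mulVec z) ''
        {z : Fin (d + 1) → ℝ | ∀ i, 0 ≤ z i}) = {w | ∃ t : ℝ, 0 ≤ t ∧ w = t • v}) :
    ∀ k : ℕ, ∃ n : ℕ, k ≤ n ∧ ∀ i j, 0 < prodM M k n i j := by
  classical
  intro k
  -- notation
  set orth : Set (Fin (d + 1) → ℝ) := {z | ∀ i, 0 ≤ z i} with horth
  set s : (Fin (d + 1) → ℝ) → ℝ := fun x => ∑ i, x i with hs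
  have s_smul : ∀ (c : ℝ) (x : Fin (d + 1) → ℝ), s (c • x) = c * s x := by
    intro c x
    simp [hs, Finset.mul_sum]
  have s_cont : Continuous s := continuous_finset_sum _ fun i _ => continuous_apply i
  set Pz : ℕ → Matrix (Fin (d + 1)) (Fin (d + 1)) ℤ := fun n => prodM M 0 n with hPz
  set Pr : ℕ → Matrix (Fin (d + 1)) (Fin (d + 1)) ℝ :=
    fun n => (Pz n).map (Int.cast : ℤ → ℝ) with hPr
  have hPznn : ∀ n i j, 0 ≤ Pz n i j := fun n => prodM_nonneg M hpos 0 n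
  have hPzdet : ∀ n, IsUnit (Pz n).det := prodM_det_isUnit M hdet 0
  -- cast facts
  have hmapmul : ∀ (A B : Matrix (Fin (d + 1)) (Fin (d + 1)) ℤ),
      (A * B).map (Int.cast : ℤ → ℝ) = A.map (Int.cast : ℤ → ℝ) * B.map (Int.cast : ℤ → ℝ) := by
    intro A B
    exact Matrix.map_mul (f := Int.castRingHom ℝ)
  have hmapone : ((1 : Matrix (Fin (d + 1)) (Fin (d + 1)) ℤ)).map (Int.cast : ℤ → ℝ) = 1 :=
    Matrix.map_one _ (by simp) (by simp)
  -- inverses over ℤ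
  set Bz : ℕ → Matrix (Fin (d + 1)) (Fin (d + 1)) ℤ := fun n => (Pz n)⁻¹ with hBz
  have hBzP : ∀ n, Bz n * Pz n = 1 := fun n => Matrix.nonsing_inv_mul _ (hPzdet n)
  have hPBz : ∀ n, Pz n * Bz n = 1 := fun n => Matrix.mul_nonsing_inv _ (hPzdet n)
  set Br : ℕ → Matrix (Fin (d + 1)) (Fin (d + 1)) ℝ :=
    fun n => (Bz n).map (Int.cast : ℤ → ℝ) with hBr
  have hBrP : ∀ n, Br n * Pr n = 1 := by
    intro n; rw [hBr, hPr, ← hmapmul, hBzP, hmapone]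
  have hPBr : ∀ n, Pr n * Br n = 1 := by
    intro n; rw [hBr, hPr, ← hmapmul, hPBz, hmapone]
  -- the cones
  set C : ℕ → Set (Fin (d + 1) → ℝ) := fun n => (fun z => (Pr n).mulVec z) '' orth with hC
  have hconeC : (⋂ n, C n) = {w | ∃ t : ℝ, 0 ≤ t ∧ w = t • v} := hcone
  -- continuity of mulVec
  have cont_mulVec : ∀ A : Matrix (Fin (d + 1)) (Fin (d + 1)) ℝ,
      Continuous fun z : Fin (d + 1) → ℝ => A.mulVec z := by
    intro A
    refine continuous_pi fun i => ?_
    simpa [Matrix.mulVec, dotProduct] using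
      continuous_finset_sum Finset.univ fun l _ => (continuous_const.mul (continuous_apply l))
  -- orthant closed
  have orth_closed : IsClosed orth := by
    have : orth = ⋂ i, {z : Fin (d + 1) → ℝ | 0 ≤ z i} := by
      ext z; simp [horth, Set.mem_iInter]
    rw [this]
    exact isClosed_iInter fun i => isClosed_le continuous_const (continuous_apply i)
  -- C n as a preimage, hence closed
  have hCpre : ∀ n, C n = (fun z => (Br n).mulVec z) ⁻¹' orth := by
    intro n
    ext z
    constructor
    · rintro ⟨x, hx, rfl⟩
      have : (Br n).mulVec ((Pr n).mulVec x) = x := by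
        rw [Matrix.mulVec_mulVec, hBrP, Matrix.one_mulVec]
      simpa [this] using hx
    · intro hz
      refine ⟨(Br n).mulVec z, hz, ?_⟩
      show (Pr n).mulVec ((Br n).mulVec z) = z
      rw [Matrix.mulVec_mulVec, hPBr, Matrix.one_mulVec]
  have C_closed : ∀ n, IsClosed (C n) := by
    intro n
    rw [hCpre n]
    exact orth_closed.preimage (cont_mulVec (Br n))
  -- C n is contained in the orthant
  have C_sub_orth : ∀ n, C n ⊆ orth := by
    rintro n z ⟨x, hx, rfl⟩
    intro i
    simp only [Matrix.mulVec, dotProduct]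
    refine Finset.sum_nonneg fun l _ => mul_nonneg ?_ (hx l)
    simp [hPr, Matrix.map_apply]
    exact_mod_cast hPznn n i l
  -- cone property
  have C_cone : ∀ n (c : ℝ), 0 ≤ c → ∀ x ∈ C n, c • x ∈ C n := by
    rintro n c hc x ⟨z, hz, rfl⟩
    refine ⟨c • z, fun i => by simpa using mul_nonneg hc (hz i), ?_⟩
    show (Pr n).mulVec (c • z) = c • (Pr n).mulVec z
    rw [Matrix.mulVec_smul]
  -- C antitone
  have C_anti : Antitone C := by
    refine antitone_nat_of_succ_le fun n => ?_
    rintro z ⟨x, hx, rfl⟩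
    have hsplit : Pz (n + 1) = Pz n * M n := prodM_succ M (Nat.zero_le n)
    have : Pr (n + 1) = Pr n * (M n).map (Int.cast : ℤ → ℝ) := by
      show (Pz (n + 1)).map (Int.cast : ℤ → ℝ) = _
      rw [hsplit, hmapmul]
    refine ⟨((M n).map (Int.cast : ℤ → ℝ)).mulVec x, ?_, ?_⟩
    · intro i
      simp only [Matrix.mulVec, dotProduct]
      refine Finset.sum_nonneg fun l _ => mul_nonneg ?_ (hx l)
      simp [Matrix.map_apply]
      exact_mod_cast hpos n i l
    · show (Pr n).mulVec (((M n).map (Int.cast : ℤ → ℝ)).mulVec x) = (Pr (n + 1)).mulVec x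
      rw [Matrix.mulVec_mulVec, ← this]
  -- s v > 0
  have hsv_ne : s v ≠ 0 := by
    intro h0
    have := (Fintype.linearIndependent_iff.mp hirr) (fun _ => (1 : ℚ)) ?_ ⟨0, by omega⟩
    · norm_num at this
    · simpa [Rat.smul_def, hs] using h0
  have hsv_pos : 0 < s v := lt_of_le_of_ne (Finset.sum_nonneg fun i _ => hv i) (Ne.symm hsv_ne)
  set vh : Fin (d + 1) → ℝ := (s v)⁻¹ • v with hvh
  have hsvh : s vh = 1 := by rw [hvh, s_smul, inv_mul_cancel₀ hsv_ne]
  -- v in all cones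
  have hvC : ∀ n, v ∈ C n := by
    have hvmem : v ∈ {w : Fin (d + 1) → ℝ | ∃ t : ℝ, 0 ≤ t ∧ w = t • v} :=
      ⟨1, by norm_num⟩
    rw [← hconeC] at hvmem
    exact fun n => Set.mem_iInter.mp hvmem n
  have hvhC : ∀ n, vh ∈ C n := fun n => C_cone n _ (inv_nonneg.mpr hsv_pos.le) v (hvC n)
  -- the truncated cones
  set K : ℕ → Set (Fin (d + 1) → ℝ) := fun n => C n ∩ {x | s x = 1} with hK
  have K_closed : ∀ n, IsClosed (K n) :=
    fun n => (C_closed n).inter (isClosed_eq s_cont continuous_const)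
  have K_compact : ∀ n, IsCompact (K n) := by
    intro n
    have hbox : IsCompact (Set.pi Set.univ fun _ : Fin (d + 1) => Set.Icc (0 : ℝ) 1) :=
      isCompact_univ_pi fun _ => isCompact_Icc
    refine IsCompact.of_isClosed_subset hbox (K_closed n) ?_
    rintro x ⟨hxC, hxs⟩
    have hxo : ∀ i, 0 ≤ x i := C_sub_orth n hxC
    intro i _
    refine ⟨hxo i, ?_⟩
    calc x i ≤ ∑ l, x l := Finset.single_le_sum (fun l _ => hxo l) (Finset.mem_univ i)
    _ = 1 := hxs
  have K_anti : Antitone K := fun m n h => Set.inter_subset_inter (C_anti h) le_rfl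
  have K_directed : Directed (· ⊇ ·) K := fun m n =>
    ⟨max m n, K_anti (le_max_left m n), K_anti (le_max_right m n)⟩
  have hvhK : ∀ n, vh ∈ K n := fun n => ⟨hvhC n, hsvh⟩
  -- intersection of K is {vh}
  have K_inter : (⋂ n, K n) ⊆ {vh} := by
    intro x hx
    have hxC : x ∈ ⋂ n, C n := Set.mem_iInter.mpr fun n => (Set.mem_iInter.mp hx n).1
    have hxs : s x = 1 := (Set.mem_iInter.mp hx 0).2
    rw [hconeC] at hxC
    obtain ⟨t, ht, rfl⟩ := hxC
    rw [s_smul] at hxs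
    have : t = (s v)⁻¹ := by field_simp at hxs ⊢; linarith
    simp [this, hvh]
  -- neighborhoods of vh eventually contain K n
  have hKU : ∀ U : Set (Fin (d + 1) → ℝ), IsOpen U → vh ∈ U → ∃ N, ∀ n, N ≤ n → K n ⊆ U := by
    intro U hU hvU
    obtain ⟨N, hN⟩ := exists_subset_nhds_of_isCompact' K_directed K_compact K_closed
      (fun x hx => by
        have : x = vh := K_inter hx
        rw [this]; exact hU.mem_nhds hvU)
    exact ⟨N, fun n hn => (K_anti hn).trans hN⟩
  -- key positivity facts about columns
  have col_pos_sum : ∀ (A : Matrix (Fin (d + 1)) (Fin (d + 1)) ℤ), (∀ i j, 0 ≤ A i j) →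
      IsUnit A.det → ∀ j, 0 < ∑ i, ((A i j : ℤ) : ℝ) := by
    intro A hA hAdet j
    have hne : ¬ (∀ i, A i j = 0) := by
      intro hcol
      have : A.det = 0 := Matrix.det_eq_zero_of_column_eq_zero j hcol
      rw [this] at hAdet
      exact (not_isUnit_zero : ¬ IsUnit (0 : ℤ)) hAdet
    push_neg at hne
    obtain ⟨i0, hi0⟩ := hne
    have hpos0 : (0 : ℝ) < ((A i0 j : ℤ) : ℝ) := by
      exact_mod_cast lt_of_le_of_ne (hA i0 j) (Ne.symm hi0)
    refine lt_of_lt_of_le hpos0 ?_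
    exact Finset.single_le_sum (f := fun l => ((A l j : ℤ) : ℝ))
      (fun l _ => Int.cast_nonneg_iff.mpr (hA l j)) (Finset.mem_univ i0)
  -- main per-column argument
  have key : ∀ j i : Fin (d + 1), ∀ᶠ n in atTop, 0 < prodM M k n i j := by
    intro j i
    -- the j-th column of Pr n, normalized, tends to vh
    set col : ℕ → Fin (d + 1) → ℝ := fun n => fun l => ((Pz n l j : ℤ) : ℝ) with hcol
    have hcolmv : ∀ n, col n = (Pr n).mulVec (Pi.single j 1) := by
      intro n
      funext l
      simp [hcol, hPr, Matrix.mulVec_single, Matrix.map_apply]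
    have hscol : ∀ n, 0 < s (col n) := fun n => col_pos_sum (Pz n) (hPznn n) (hPzdet n) j
    set u : ℕ → Fin (d + 1) → ℝ := fun n => (s (col n))⁻¹ • col n with hu
    have huK : ∀ n, u n ∈ K n := by
      intro n
      constructor
      · refine C_cone n _ (inv_nonneg.mpr (hscol n).le) (col n) ?_
        rw [hcolmv n]
        exact ⟨Pi.single j 1, fun l => by
          simp only [Pi.single_apply]
          split <;> norm_num, rfl⟩
      · show s ((s (col n))⁻¹ • col n) = 1
        rw [s_smul, inv_mul_cancel₀ (hscol n).ne']
    have hutend : Tendsto u atTop (𝓝 vh) := by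
      rw [tendsto_nhds]
      intro U hU hvU
      obtain ⟨N, hN⟩ := hKU U hU hvU
      filter_upwards [eventually_ge_atTop N] with n hn
      exact hN n hn (huK n)
    -- transport through B := Br k
    set B := Br k with hB
    set f : ℕ → Fin (d + 1) → ℝ := fun n => B.mulVec (u n) with hf
    have hftend : Tendsto f atTop (𝓝 (B.mulVec vh)) :=
      ((cont_mulVec B).continuousAt.tendsto).comp hutend
    have hsftend : Tendsto (fun n => s (f n)) atTop (𝓝 (s (B.mulVec vh))) :=
      (s_cont.continuousAt.tendsto).comp hftend
    -- the limit has nonzero coordinates and nonzero sum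
    have hBnz : ∀ l, ¬ (∀ m, Bz k l m = 0) := by
      intro l hrow
      have : (Bz k * Pz k) l l = 0 := by
        rw [Matrix.mul_apply]
        exact Finset.sum_eq_zero fun m _ => by rw [hrow m, zero_mul]
      rw [hBzP k] at this
      simp [Matrix.one_apply] at this
    have hBv_entry : ∀ l, B.mulVec v l = ∑ m, ((Bz k l m : ℤ) : ℝ) * v m := by
      intro l
      simp [hB, hBr, Matrix.mulVec, dotProduct, Matrix.map_apply]
    have hBv_ne : ∀ l, B.mulVec v l ≠ 0 := by
      intro l h0
      rw [hBv_entry l] at h0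
      have := (Fintype.linearIndependent_iff.mp hirr) (fun m => ((Bz k l m : ℤ) : ℚ)) ?_
      · exact hBnz l fun m => by exact_mod_cast this m
      · rw [← h0]
        refine Finset.sum_congr rfl fun m _ => ?_
        rw [Rat.smul_def]
        norm_num
    have hsBv_ne : s (B.mulVec v) ≠ 0 := by
      intro h0
      have hswap : s (B.mulVec v) = ∑ m, ((∑ l, Bz k l m : ℤ) : ℝ) * v m := by
        simp only [hs]
        rw [Finset.sum_congr rfl fun l _ => hBv_entry l, Finset.sum_comm]
        refine Finset.sum_congr rfl fun m _ => ?_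
        rw [← Finset.sum_mul]
        push_cast
        ring
      rw [hswap] at h0
      have hz := (Fintype.linearIndependent_iff.mp hirr) (fun m => ((∑ l, Bz k l m : ℤ) : ℚ)) ?_
      · -- all column sums of Bz k vanish; contradiction with Bz k * Pz k = 1
        have hcolsum : ∀ m, (∑ l, Bz k l m) = 0 := fun m => by exact_mod_cast hz m
        have h1 : ∑ l, (Bz k * Pz k) l i = 0 := by
          simp only [Matrix.mul_apply]
          rw [Finset.sum_comm]
          refine Finset.sum_eq_zero fun m _ => ?_
          rw [← Finset.sum_mul, hcolsum m, zero_mul]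
        rw [hBzP k] at h1
        have : (1 : ℤ) = 0 := by
          rw [← h1]
          rw [Finset.sum_eq_single i (fun l _ hl => by simp [Matrix.one_apply, hl]) (by simp)]
          simp [Matrix.one_apply]
        norm_num at this
      · rw [← h0]
        refine Finset.sum_congr rfl fun m _ => ?_
        rw [Rat.smul_def]
        norm_num
    have hBvh : B.mulVec vh = (s v)⁻¹ • B.mulVec v := by
      rw [hvh, Matrix.mulVec_smul]
    have hsBvh_ne : s (B.mulVec vh) ≠ 0 := by
      rw [hBvh, s_smul]
      exact mul_ne_zero (inv_ne_zero hsv_ne) hsBv_ne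
    -- the normalized image tends to yh
    set yh : Fin (d + 1) → ℝ := (s (B.mulVec vh))⁻¹ • B.mulVec vh with hyh
    set g : ℕ → Fin (d + 1) → ℝ := fun n => (s (f n))⁻¹ • f n with hg
    have hgtend : Tendsto g atTop (𝓝 yh) := by
      exact (hsftend.inv₀ hsBvh_ne).smul hftend
    have hyh_i_ne : yh i ≠ 0 := by
      have : yh i = (s (B.mulVec vh))⁻¹ * ((s v)⁻¹ * B.mulVec v i) := by
        rw [hyh, hBvh]
        simp [mul_comm]
      rw [this]
      exact mul_ne_zero (inv_ne_zero hsBvh_ne) (mul_ne_zero (inv_ne_zero hsv_ne) (hBv_ne i))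
    -- identify g n with the normalized column of prodM M k n, for n ≥ k
    set xq : ℕ → Fin (d + 1) → ℝ := fun n => fun l => ((prodM M k n l j : ℤ) : ℝ) with hxq
    have hsxq : ∀ n, 0 < s (xq n) := fun n =>
      col_pos_sum (prodM M k n) (prodM_nonneg M hpos k n) (prodM_det_isUnit M hdet k n) j
    have hfactor : ∀ n, k ≤ n → B.mulVec (col n) = xq n := by
      intro n hn
      have hsplit : Pz n = Pz k * prodM M k n := prodM_split M (Nat.zero_le k) hn
      have hxqmv : ∀ nn, xq nn = ((prodM M k nn).map (Int.cast : ℤ → ℝ)).mulVec (Pi.single j 1) := by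
        intro nn
        funext l
        simp [hxq, Matrix.mulVec_single, Matrix.map_apply]
      have hPrn : Pr n = Pr k * (prodM M k n).map (Int.cast : ℤ → ℝ) := by
        show (Pz n).map (Int.cast : ℤ → ℝ) = _
        rw [hsplit, hmapmul]
      rw [hcolmv n, hxqmv n, hPrn, ← Matrix.mulVec_mulVec, Matrix.mulVec_mulVec,
        hBrP k, Matrix.one_mulVec]
    have hgq : ∀ n, k ≤ n → g n = (s (xq n))⁻¹ • xq n := by
      intro n hn
      have hfn : f n = (s (col n))⁻¹ • xq n := by
        rw [hf]
        simp only [hu]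
        rw [Matrix.mulVec_smul, hfactor n hn]
      have hsfn : s (f n) = (s (col n))⁻¹ * s (xq n) := by rw [hfn, s_smul]
      rw [hg]
      simp only [hfn, smul_smul]
      rw [s_smul]
      congr 1
      rw [mul_inv, inv_inv, mul_comm (s (col n)) (s (xq n))⁻¹, mul_assoc,
        mul_inv_cancel₀ (hscol n).ne', mul_one]
    -- g n i is eventually nonnegative, so yh i > 0
    have hg_nonneg : ∀ᶠ n in atTop, 0 ≤ g n i := by
      filter_upwards [eventually_ge_atTop k] with n hn
      rw [hgq n hn]
      simp only [Pi.smul_apply, smul_eq_mul]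
      refine mul_nonneg (inv_nonneg.mpr (hsxq n).le) ?_
      simp only [hxq]
      exact_mod_cast prodM_nonneg M hpos k n i j
    have hgi_tend : Tendsto (fun n => g n i) atTop (𝓝 (yh i)) := by
      exact (continuous_apply i).continuousAt.tendsto.comp hgtend
    have hyh_i_pos : 0 < yh i :=
      lt_of_le_of_ne (ge_of_tendsto hgi_tend hg_nonneg) (Ne.symm hyh_i_ne)
    have hev : ∀ᶠ n in atTop, 0 < g n i :=
      hgi_tend.eventually (eventually_gt_nhds hyh_i_pos)
    filter_upwards [hev, eventually_ge_atTop k] with n hgn hn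
    rw [hgq n hn] at hgn
    simp only [Pi.smul_apply, smul_eq_mul] at hgn
    have hxqi : 0 < xq n i := by
      by_contra hle
      push_neg at hle
      have : (s (xq n))⁻¹ * xq n i ≤ 0 :=
        mul_nonpos_of_nonneg_of_nonpos (inv_nonneg.mpr (hsxq n).le) hle
      linarith
    simp only [hxq] at hxqi
    exact_mod_cast hxqi
  -- combine over all entries
  have hall : ∀ᶠ n in atTop, ∀ i j, 0 < prodM M k n i j :=
    eventually_all.mpr fun i => eventually_all.mpr fun j => key j i
  obtain ⟨n, hn, hnpos⟩ := ((eventually_ge_atTop k).and hall).exists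
  exact ⟨n, hn, hnpos⟩
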